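/- Let x and y be real numbers with y ≥ 2, and let I = (x, x+y]. Then #{n ∈ ℕ : x < n and n + t_n ≤ x + y} ≥ (number of y-smooth integers in I) − π(y). -/

import Mathlib

/-- `tn n` is the least nonnegative integer `t` such that there is a (possibly empty)
subset `S` of `{n+1, ..., n+t}` with `n * ∏_{m ∈ S} m` a perfect square. -/
noncomputable def tn (n : ℕ) : ℕ :=
  sInf {t : ℕ | ∃ S ⊆ Finset.Icc (n + 1) (n + t), IsSquare (n * ∏ m ∈ S, m)}

/-- A positive integer is `y`-smooth if all of its prime divisors are at most `y`. -/
def IsYSmooth (y : ℝ) (n : ℕ) : Prop := ∀ p : ℕ, p.Prime → p ∣ n → (p : ℝ) ≤ y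

/-- `piReal y` is the number of primes `≤ y`. -/
noncomputable def piReal (y : ℝ) : ℕ := {p : ℕ | p.Prime ∧ (p : ℝ) ≤ y}.ncard

/-- The set of primes dividing `n` to an odd power. -/
def oddSupp (n : ℕ) : Finset ℕ :=
  n.primeFactors.filter fun p => Odd (n.factorization p)

lemma mem_oddSupp {n p : ℕ} (hn : n ≠ 0) : p ∈ oddSupp n ↔ Odd (n.factorization p) := by
  simp only [oddSupp, Finset.mem_filter, and_iff_right_iff_imp]
  intro h
  rw [← Nat.support_factorization]
  exact Finsupp.mem_support_iff.2 (by rintro h0; rw [h0] at h; simp [Nat.odd_iff] at h)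

lemma isSquare_of_even_factorization {n : ℕ} (hn : n ≠ 0)
    (h : ∀ p, Even (n.factorization p)) : IsSquare n := by
  refine ⟨n.factorization.prod fun p k => p ^ (k / 2), ?_⟩
  rw [← Finsupp.prod_mul]
  conv_lhs => rw [← Nat.factorization_prod_pow_eq_self hn]
  refine Finsupp.prod_congr fun p hp => ?_
  rw [← pow_add]
  congr 1
  obtain ⟨k, hk⟩ := h p
  omega

theorem stmt_7 (x y : ℝ) (hy : 2 ≤ y) :
    ({n : ℕ | 0 < n ∧ x < (n : ℝ) ∧ (n : ℝ) ≤ x + y ∧ IsYSmooth y n}.ncard : ℤ)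
        - (piReal y : ℤ)
      ≤ ({n : ℕ | 0 < n ∧ x < (n : ℝ) ∧ (n : ℝ) + (tn n : ℝ) ≤ x + y}.ncard : ℤ) := by
  set Sm : Set ℕ := {n : ℕ | 0 < n ∧ x < (n : ℝ) ∧ (n : ℝ) ≤ x + y ∧ IsYSmooth y n} with hSmdef
  set G : Set ℕ := {n : ℕ | 0 < n ∧ x < (n : ℝ) ∧ (n : ℝ) + (tn n : ℝ) ≤ x + y} with hGdef
  set N : ℕ := ⌊x + y⌋₊ with hNdef
  -- finiteness
  have hSmsub : Sm ⊆ Set.Iic N := by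
    rintro n ⟨hn0, hxn, hnxy, _⟩
    exact Nat.le_floor hnxy
  have hGsub : G ⊆ Set.Iic N := by
    rintro n ⟨hn0, hxn, hnxy⟩
    refine Nat.le_floor (le_trans ?_ hnxy)
    have : (0:ℝ) ≤ (tn n : ℝ) := Nat.cast_nonneg _
    linarith
  have hSmfin : Sm.Finite := (Set.finite_Iic N).subset hSmsub
  have hGfin : G.Finite := (Set.finite_Iic N).subset hGsub
  -- the finset of primes ≤ y
  set P : Finset ℕ := (Finset.range (⌊y⌋₊ + 1)).filter (fun p => p.Prime ∧ (p : ℝ) ≤ y) with hPdef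
  have hpiP : piReal y = P.card := by
    rw [piReal, ← Set.ncard_coe_finset]
    congr 1
    ext p
    simp only [hPdef, Finset.coe_filter, Finset.mem_range, Set.mem_setOf_eq, Finset.mem_coe]
    constructor
    · rintro ⟨hp, hpy⟩
      exact ⟨Nat.lt_succ_of_le (Nat.le_floor hpy), hp, hpy⟩
    · rintro ⟨_, hp, hpy⟩; exact ⟨hp, hpy⟩
  -- the bad set
  have hBfin : (Sm \ G).Finite := hSmfin.diff
  set badF : Finset ℕ := hBfin.toFinset with hbadF
  have hmemBad : ∀ {m : ℕ}, m ∈ badF ↔ m ∈ Sm \ G := fun {m} => hBfin.mem_toFinset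
  -- key claim : badF.card ≤ P.card
  have key : badF.card ≤ P.card := by
    by_contra hlt
    push_neg at hlt
    have hprodne : ∀ S : Finset ℕ, S ⊆ badF → (∏ m ∈ S, m) ≠ 0 := by
      intro S hS
      refine Finset.prod_ne_zero_iff.2 fun m hm => ?_
      have := (hmemBad.mp (hS hm)).1.1
      omega
    have hmaps : ∀ S ∈ badF.powerset,
        oddSupp (∏ m ∈ S, m) ∈ P.powerset := by
      intro S hS
      rw [Finset.mem_powerset] at hS ⊢
      intro p hp
      have hne := hprodne S hS
      have hp' := (mem_oddSupp hne).mp hp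
      have hpmem : p ∈ (∏ m ∈ S, m).primeFactors := by
        rw [← Nat.support_factorization]
        exact Finsupp.mem_support_iff.2 (by rintro h0; rw [h0] at hp'; simp [Nat.odd_iff] at hp')
      have hpp : p.Prime := Nat.prime_of_mem_primeFactors hpmem
      have hpd : p ∣ ∏ m ∈ S, m := Nat.dvd_of_mem_primeFactors hpmem
      obtain ⟨m, hmS, hpm⟩ := hpp.prime.exists_mem_finset_dvd hpd
      have hsm : IsYSmooth y m := (hmemBad.mp (hS hmS)).1.2.2.2
      have hpy : (p : ℝ) ≤ y := hsm p hpp hpm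
      simp only [hPdef, Finset.mem_filter, Finset.mem_range]
      exact ⟨Nat.lt_succ_of_le (Nat.le_floor hpy), hpp, hpy⟩
    have hcard : P.powerset.card < badF.powerset.card := by
      rw [Finset.card_powerset, Finset.card_powerset]
      exact Nat.pow_lt_pow_right one_lt_two hlt
    obtain ⟨A, hA, B, hB, hAB, hfeq⟩ :=
      Finset.exists_ne_map_eq_of_card_lt_of_maps_to hcard hmaps
    rw [Finset.mem_powerset] at hA hB
    -- the symmetric difference
    set C : Finset ℕ := symmDiff A B with hCdef
    have hCsub : C ⊆ badF := by
      have h1 : C ⊆ A ∪ B := by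
        rw [hCdef, symmDiff_def, Finset.sup_eq_union]
        exact Finset.union_subset_union Finset.sdiff_subset Finset.sdiff_subset
      exact h1.trans (Finset.union_subset hA hB)
    have hCne : C.Nonempty := by
      rw [Finset.nonempty_iff_ne_empty]
      intro h
      exact hAB (symmDiff_eq_bot.mp (by rw [← hCdef, h]; rfl))
    have hA0 : (∏ m ∈ A, m) ≠ 0 := hprodne A hA
    have hB0 : (∏ m ∈ B, m) ≠ 0 := hprodne B hB
    have hC0 : (∏ m ∈ C, m) ≠ 0 := hprodne C hCsub
    have hI0 : (∏ m ∈ A ∩ B, m) ≠ 0 := hprodne _ ((Finset.inter_subset_left).trans hA)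
    -- product identity
    have hid : (∏ m ∈ A, m) * (∏ m ∈ B, m)
        = (∏ m ∈ A ∩ B, m) ^ 2 * ∏ m ∈ C, m := by
      have e1 : (∏ m ∈ A \ B, m) * (∏ m ∈ A ∩ B, m) = ∏ m ∈ A, m := by
        rw [← Finset.sdiff_inter_self_left A B]
        exact Finset.prod_sdiff Finset.inter_subset_left
      have e2 : (∏ m ∈ B \ A, m) * (∏ m ∈ A ∩ B, m) = ∏ m ∈ B, m := by
        rw [Finset.inter_comm A B, ← Finset.sdiff_inter_self_left B A]
        exact Finset.prod_sdiff Finset.inter_subset_left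
      have e3 : (∏ m ∈ C, m) = (∏ m ∈ A \ B, m) * (∏ m ∈ B \ A, m) := by
        rw [hCdef, symmDiff_def, Finset.sup_eq_union]
        exact Finset.prod_union disjoint_sdiff_sdiff
      rw [← e1, ← e2, e3]; ring
    -- the product over C is a square
    have hCsq : IsSquare (∏ m ∈ C, m) := by
      refine isSquare_of_even_factorization hC0 fun p => ?_
      have h1 : Even (((∏ m ∈ A, m) * (∏ m ∈ B, m)).factorization p) := by
        rw [Nat.factorization_mul hA0 hB0, Finsupp.add_apply]
        have hpar : Odd ((∏ m ∈ A, m).factorization p) ↔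
            Odd ((∏ m ∈ B, m).factorization p) := by
          rw [← mem_oddSupp hA0, ← mem_oddSupp hB0, hfeq]
        rcases Nat.even_or_odd ((∏ m ∈ A, m).factorization p) with he | ho
        · have : ¬ Odd ((∏ m ∈ B, m).factorization p) := by
            rw [← hpar, Nat.not_even_iff_odd.symm]; exact fun h => h he
          rw [Nat.not_even_iff_odd.symm, not_not] at this
          exact he.add this
        · have hoB := hpar.mp ho
          rw [Nat.odd_iff] at ho hoB
          rw [Nat.even_iff]; omega
      rw [hid, Nat.factorization_mul (pow_ne_zero 2 hI0) hC0, Finsupp.add_apply,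
        Nat.factorization_pow, Finsupp.smul_apply] at h1
      rw [Nat.even_add] at h1
      exact h1.mp ⟨(∏ m ∈ A ∩ B, m).factorization p, by simp [two_mul]⟩
    -- the minimum of C is good, contradiction
    set n : ℕ := C.min' hCne with hndef
    have hnC : n ∈ C := C.min'_mem hCne
    have hnbad := hmemBad.mp (hCsub hnC)
    obtain ⟨⟨hn0, hxn, hnxy, _⟩, hnG⟩ := hnbad
    have hnN : n ≤ N := Nat.le_floor hnxy
    have hSsub : C.erase n ⊆ Finset.Icc (n + 1) (n + (N - n)) := by
      intro m hm
      have hmC : m ∈ C := Finset.mem_of_mem_erase hm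
      have hmn : m ≠ n := Finset.ne_of_mem_erase hm
      have hmin : n ≤ m := C.min'_le m hmC
      have hmN : m ≤ N := Nat.le_floor (hmemBad.mp (hCsub hmC)).1.2.2.1
      rw [Finset.mem_Icc]
      omega
    have htn : tn n ≤ N - n := by
      refine Nat.sInf_le ?_
      refine ⟨C.erase n, hSsub, ?_⟩
      have hpe := Finset.mul_prod_erase C (fun m => m) hnC
      rw [hpe]
      exact hCsq
    apply hnG
    refine ⟨hn0, hxn, ?_⟩
    have h1 : (n : ℝ) + (tn n : ℝ) ≤ (N : ℝ) := by
      have : n + tn n ≤ N := by omega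
      calc (n : ℝ) + (tn n : ℝ) = ((n + tn n : ℕ) : ℝ) := by push_cast; ring
        _ ≤ (N : ℝ) := Nat.cast_le.mpr this
    have h2 : (N : ℝ) ≤ x + y := Nat.floor_le (by
      have : (1 : ℝ) ≤ (n : ℝ) := by exact_mod_cast hn0
      linarith)
    linarith
  -- conclude
  have hcount : Sm.ncard ≤ G.ncard + piReal y := by
    have e1 : (Sm ∩ G).ncard + (Sm \ G).ncard = Sm.ncard :=
      Set.ncard_inter_add_ncard_diff_eq_ncard Sm G hSmfin
    have e2 : (Sm ∩ G).ncard ≤ G.ncard :=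
      Set.ncard_le_ncard Set.inter_subset_right hGfin
    have e3 : (Sm \ G).ncard ≤ piReal y := by
      rw [hpiP, ← hBfin.coe_toFinset, Set.ncard_coe_finset]
      exact key
    omega
  omega
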